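/- There exists no r-regular link-irregular graph on n vertices with n ≤ 9. -/

import Mathlib

open SimpleGraph Finset

/-- The link of a vertex `v`: the subgraph induced by the neighborhood of `v`. -/
def SimpleGraph.link {V : Type*} (G : SimpleGraph V) (v : V) :
    SimpleGraph (G.neighborSet v) :=
  G.induce (G.neighborSet v)

/-- A graph is link-irregular if the links of any two distinct vertices are
non-isomorphic. -/
def SimpleGraph.LinkIrregular {V : Type*} (G : SimpleGraph V) : Prop :=
  ∀ u v : V, u ≠ v → ¬ Nonempty (G.link u ≃g G.link v)

set_option linter.unusedSectionVars false
set_option linter.unnecessarySeqFocus false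
set_option linter.unreachableTactic false
set_option linter.unusedTactic false
set_option synthInstance.maxSize 2000
set_option maxRecDepth 10000
set_option maxHeartbeats 1000000

section helpers
variable {V : Type*}

lemma link_adj {G : SimpleGraph V} {v : V} {a b : G.neighborSet v} :
    (G.link v).Adj a b ↔ G.Adj ↑a ↑b := Iff.rfl

lemma twin_link_iso [DecidableEq V] (G : SimpleGraph V) (u x : V) (hux : u ≠ x)
    (hsame : ∀ z, z ≠ u → z ≠ x → (G.Adj u z ↔ G.Adj x z)) :
    Nonempty (G.link u ≃g G.link x) := by
  have hmem : ∀ a, a ∈ G.neighborSet u ↔ (Equiv.swap u x) a ∈ G.neighborSet x := by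
    intro a
    by_cases h1 : a = u
    · subst h1; simp [Equiv.swap_apply_left]
    by_cases h2 : a = x
    · subst h2
      simp only [Equiv.swap_apply_right, mem_neighborSet]
      exact G.adj_comm u a
    · rw [Equiv.swap_apply_of_ne_of_ne h1 h2]
      simpa using hsame a h1 h2
  have key : ∀ z w : V, z ∈ G.neighborSet u → w ∈ G.neighborSet u →
      (G.Adj ((Equiv.swap u x) z) ((Equiv.swap u x) w) ↔ G.Adj z w) := by
    intro z w hz hw
    have hzu : z ≠ u := fun h => G.irrefl (h ▸ hz)
    have hwu : w ≠ u := fun h => G.irrefl (h ▸ hw)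
    by_cases hzx : z = x <;> by_cases hwx : w = x
    · subst hzx; subst hwx; simp
    · subst hzx
      rw [Equiv.swap_apply_right, Equiv.swap_apply_of_ne_of_ne hwu hwx]
      exact hsame w hwu hwx
    · rw [hwx, Equiv.swap_apply_right, Equiv.swap_apply_of_ne_of_ne hzu hzx,
        G.adj_comm z u, G.adj_comm z x]
      exact hsame z hzu hzx
    · rw [Equiv.swap_apply_of_ne_of_ne hzu hzx, Equiv.swap_apply_of_ne_of_ne hwu hwx]
  exact ⟨{ toEquiv := (Equiv.swap u x).subtypeEquiv hmem,
           map_rel_iff' := fun {a b} => by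
             rw [link_adj, link_adj]
             exact key a b a.2 b.2 }⟩

/-- automorphism moves a vertex → two isomorphic links -/
lemma aut_link_iso (G : SimpleGraph V) (σ : G ≃g G) (v : V) :
    Nonempty (G.link v ≃g G.link (σ v)) := by
  have hmem : ∀ a, a ∈ G.neighborSet v ↔ σ a ∈ G.neighborSet (σ v) := by
    intro a; simp [mem_neighborSet, σ.map_adj_iff]
  exact ⟨{ toEquiv := σ.toEquiv.subtypeEquiv hmem,
           map_rel_iff' := fun {a b} => by
             rw [link_adj, link_adj]
             exact σ.map_adj_iff }⟩

/-- automorphism of the complement is an automorphism -/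
def autOfComplAut (G : SimpleGraph V) (σ : Gᶜ ≃g Gᶜ) : G ≃g G where
  toEquiv := σ.toEquiv
  map_rel_iff' := by
    intro a b
    by_cases hab : a = b
    · subst hab; simp
    · have hne : σ a ≠ σ b := fun h => hab (σ.toEquiv.injective h)
      have h := σ.map_adj_iff (v := a) (w := b)
      simp only [compl_adj] at h
      constructor
      · intro hAdj
        by_contra hA
        exact (h.mpr ⟨hab, hA⟩).2 hAdj
      · intro hAdj
        by_contra hA
        exact (h.mp ⟨hne, hA⟩).2 hAdj

end helpers

lemma perm_apply_inv_self' {α : Type*} (f : Equiv.Perm α) (x : α) : f (f⁻¹ x) = x :=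
  f.apply_symm_apply x

lemma perm_inv_apply_self' {α : Type*} (f : Equiv.Perm α) (x : α) : f⁻¹ (f x) = x :=
  f.symm_apply_apply x

section twoRegular
variable {V : Type*} [Fintype V] [DecidableEq V]

lemma other_neighbor (H : SimpleGraph V) [DecidableRel H.Adj] (h2 : H.IsRegularOfDegree 2)
    {u x : V} (hux : H.Adj u x) : ∃ w, H.Adj u w ∧ w ≠ x := by
  have hcard : ((H.neighborFinset u).erase x).Nonempty := by
    rw [← Finset.card_pos, Finset.card_erase_of_mem (by simpa using hux)]
    have := h2 u
    rw [SimpleGraph.degree] at this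
    omega
  obtain ⟨w, hw⟩ := hcard
  rw [Finset.mem_erase, SimpleGraph.mem_neighborFinset] at hw
  exact ⟨w, hw.2, hw.1⟩

lemma close_cycle (H : SimpleGraph V) {u x v w : V} (hadj : H.Adj u x) (q : H.Walk x v)
    (hp : (Walk.cons hadj q).IsPath) (huw : H.Adj u w) (hwx : w ≠ x)
    (hw : w ∈ (Walk.cons hadj q).support) :
    ∃ (z : V) (c : H.Walk z z), c.IsCycle := by
  set p := Walk.cons hadj q with hpdef
  refine ⟨w, Walk.cons (huw.symm) (p.takeUntil w hw), ?_⟩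
  rw [Walk.cons_isCycle_iff]
  refine ⟨hp.takeUntil hw, ?_⟩
  intro he
  have he' : s(w, u) ∈ p.edges := Walk.edges_takeUntil_subset p hw he
  rw [hpdef, Walk.edges_cons, List.mem_cons] at he'
  rcases he' with h1 | h2
  · rw [Sym2.eq_iff] at h1
    rcases h1 with ⟨h, _⟩ | ⟨h, _⟩
    · exact huw.ne' h
    · exact hwx h
  · have : u ∈ q.support := Walk.snd_mem_support_of_mem_edges q h2
    rw [Walk.cons_isPath_iff] at hp
    exact hp.2 this

lemma cycle_aux (H : SimpleGraph V) [DecidableRel H.Adj] (h2 : H.IsRegularOfDegree 2) :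
    ∀ (k : ℕ) (u v : V) (p : H.Walk u v), p.IsPath → 1 ≤ p.length →
      Fintype.card V ≤ k + p.support.length →
      ∃ (z : V) (c : H.Walk z z), c.IsCycle := by
  intro k
  induction k with
  | zero =>
    intro u v p hp hlen hcard
    cases p with
    | nil => simp at hlen
    | @cons _ x _ hadj q =>
      obtain ⟨w, huw, hwx⟩ := other_neighbor H h2 hadj
      by_cases hw : w ∈ (Walk.cons hadj q).support
      · exact close_cycle H hadj q hp huw hwx hw
      · exfalso
        have hnodup : (w :: (Walk.cons hadj q).support).Nodup :=
          List.Nodup.cons hw hp.support_nodup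
        have := hnodup.length_le_card
        simp only [List.length_cons] at this
        omega
  | succ k ih =>
    intro u v p hp hlen hcard
    cases p with
    | nil => simp at hlen
    | @cons _ x _ hadj q =>
      obtain ⟨w, huw, hwx⟩ := other_neighbor H h2 hadj
      by_cases hw : w ∈ (Walk.cons hadj q).support
      · exact close_cycle H hadj q hp huw hwx hw
      · have hw' : (Walk.cons (huw.symm) (Walk.cons hadj q)).IsPath := by
          rw [Walk.cons_isPath_iff]
          exact ⟨hp, hw⟩
        apply ih w v _ hw' (by simp) _
        rw [Walk.support_cons, List.length_cons]
        omega

lemma exists_cycle_of_two_regular (H : SimpleGraph V) [DecidableRel H.Adj]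
    (h2 : H.IsRegularOfDegree 2) (hne : Nonempty V) :
    ∃ (z : V) (c : H.Walk z z), c.IsCycle := by
  obtain ⟨u⟩ := hne
  have : (H.neighborFinset u).Nonempty := by
    rw [← Finset.card_pos, ← SimpleGraph.degree, h2 u]; norm_num
  obtain ⟨x, hx⟩ := this
  rw [SimpleGraph.mem_neighborFinset] at hx
  have hpath : (Walk.cons hx Walk.nil).IsPath := by
    rw [Walk.cons_isPath_iff]
    exact ⟨Walk.IsPath.nil, by simp [hx.ne]⟩
  exact cycle_aux H h2 (Fintype.card V) u x (Walk.cons hx Walk.nil) hpath (by simp)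
    (by simp)

lemma exists_aut_of_two_regular (H : SimpleGraph V) [DecidableRel H.Adj]
    (h2 : H.IsRegularOfDegree 2) (hne : Nonempty V) :
    ∃ (σ : H ≃g H) (x : V), σ x ≠ x := by
  obtain ⟨v, c, hc⟩ := exists_cycle_of_two_regular H h2 hne
  set s : List V := c.support.tail with hs
  have hnodup : s.Nodup := hc.support_nodup
  have hslen : s.length = c.length := by
    rw [hs, List.length_tail, Walk.length_support]
    omega
  have hm : 3 ≤ s.length := by rw [hslen]; exact hc.three_le_length
  have hsne : s ≠ [] := by
    intro h; rw [h] at hm; simp at hm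
  have hsupp : c.support = v :: s := by
    rw [hs]; exact c.support_eq_cons
  have hchain : List.Chain' H.Adj (v :: s) := by
    rw [← hsupp]; exact c.isChain_adj_support
  have keyidx : ∀ i (hi : i < s.length),
      H.Adj s[i] (s[(i+1) % s.length]'(Nat.mod_lt _ (by omega))) := by
    intro i hi
    rcases Nat.lt_or_ge i (s.length - 1) with h | h
    · have hmod : (i+1) % s.length = i + 1 := Nat.mod_eq_of_lt (by omega)
      have hch := List.isChain_iff_getElem.mp hchain (i+1) (by simp; omega)
      simp only [List.get_eq_getElem, List.getElem_cons_succ] at hch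
      simp_rw [hmod]
      exact hch
    · have hieq : i = s.length - 1 := by omega
      have hmod : (i+1) % s.length = 0 := by
        rw [hieq, Nat.sub_add_cancel (by omega), Nat.mod_self]
      have hlastv : s[i] = v := by
        have h1 : c.support.getLast (by simp) = v := c.getLast_support
        simp only [hsupp] at h1
        rw [List.getLast_cons hsne, List.getLast_eq_getElem] at h1
        rw [← h1]
        congr 1
        try omega
      have h0 := List.isChain_iff_getElem.mp hchain 0 (by simp; omega)
      simp only [List.get_eq_getElem, List.getElem_cons_succ, List.getElem_cons_zero] at h0
      simp_rw [hmod, hlastv]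
      exact h0
  have keyA : ∀ x ∈ s, H.Adj x (s.formPerm x) := by
    intro x hx
    obtain ⟨i, hi, rfl⟩ := List.getElem_of_mem hx
    rw [List.formPerm_apply_getElem s hnodup i hi]
    exact keyidx i hi
  have hf_mem : ∀ x ∈ s, s.formPerm x ∈ s := fun x hx => List.formPerm_apply_mem_of_mem hx
  have hfinv_mem : ∀ x ∈ s, s.formPerm⁻¹ x ∈ s := by
    intro x hx
    apply List.mem_of_formPerm_apply_mem
    simpa using hx
  have hfix : ∀ x ∈ s, s.formPerm x ≠ x := by
    intro x hx h
    have := (List.formPerm_apply_mem_eq_self_iff s hnodup x hx).mp h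
    omega
  have hf2 : ∀ x ∈ s, s.formPerm (s.formPerm x) ≠ x := by
    intro x hx h
    obtain ⟨i, hi, rfl⟩ := List.getElem_of_mem hx
    have hi1 : (i+1) % s.length < s.length := Nat.mod_lt _ (by omega)
    have h1 := List.formPerm_apply_getElem s hnodup i hi
    have h2' := List.formPerm_apply_getElem s hnodup ((i+1) % s.length) hi1
    rw [h1, h2'] at h
    have hidx : ((i + 1) % s.length + 1) % s.length = i :=
      (List.Nodup.getElem_inj_iff hnodup).mp h
    have h3 : (i + 1 + 1) % s.length = i :=
      (Nat.mod_add_mod (i+1) s.length 1).symm.trans hidx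
    have hidx2 : (i + 2) % s.length = i := by
      rw [show i + 2 = i + 1 + 1 by omega]
      exact h3
    have hmodeq : i + 2 ≡ i [MOD s.length] := by
      unfold Nat.ModEq
      rw [hidx2, Nat.mod_eq_of_lt hi]
    have hdvd : s.length ∣ 2 := by
      have := (Nat.modEq_iff_dvd' (by omega : i ≤ i + 2)).mp hmodeq.symm
      simpa using this
    have := Nat.le_of_dvd (by norm_num) hdvd
    omega
  have hAdjInv : ∀ x ∈ s, H.Adj x (s.formPerm⁻¹ x) := by
    intro x hx
    have h1 := keyA _ (hfinv_mem x hx)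
    rw [perm_apply_inv_self'] at h1
    exact h1.symm
  have hpairne : ∀ x ∈ s, s.formPerm x ≠ s.formPerm⁻¹ x := by
    intro x hx h
    apply hf2 x hx
    rw [h, perm_apply_inv_self']
  have hNbhd : ∀ x ∈ s, H.neighborFinset x = {s.formPerm x, s.formPerm⁻¹ x} := by
    intro x hx
    have hsub : ({s.formPerm x, s.formPerm⁻¹ x} : Finset V) ⊆ H.neighborFinset x := by
      intro y hy
      rw [Finset.mem_insert, Finset.mem_singleton] at hy
      rw [SimpleGraph.mem_neighborFinset]
      rcases hy with rfl | rfl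
      · exact keyA x hx
      · exact hAdjInv x hx
    have hcard2 : ({s.formPerm x, s.formPerm⁻¹ x} : Finset V).card = 2 := by
      rw [Finset.card_insert_of_notMem (by simpa using hpairne x hx), Finset.card_singleton]
    have hdeg : (H.neighborFinset x).card = 2 := h2 x
    exact (Finset.eq_of_subset_of_card_le hsub (by omega)).symm
  have hAdjChar : ∀ x ∈ s, ∀ y, H.Adj x y ↔ (y = s.formPerm x ∨ y = s.formPerm⁻¹ x) := by
    intro x hx y
    rw [← SimpleGraph.mem_neighborFinset, hNbhd x hx, Finset.mem_insert, Finset.mem_singleton]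
  have hmapiff : ∀ a b : V, H.Adj (s.formPerm a) (s.formPerm b) ↔ H.Adj a b := by
    intro a b
    by_cases ha : a ∈ s <;> by_cases hb : b ∈ s
    · rw [hAdjChar _ (hf_mem a ha) (s.formPerm b), hAdjChar _ ha b]
      constructor
      · rintro (h | h)
        · exact Or.inl (s.formPerm.injective h)
        · right
          rw [perm_inv_apply_self'] at h
          rw [← h, perm_inv_apply_self']
      · rintro (rfl | rfl)
        · exact Or.inl rfl
        · right
          rw [perm_apply_inv_self', perm_inv_apply_self']
    · rw [List.formPerm_apply_of_notMem hb]
      constructor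
      · intro h
        exfalso
        have := (hAdjChar _ (hf_mem a ha) b).mp h
        rcases this with rfl | rfl
        · exact hb (hf_mem _ (hf_mem a ha))
        · exact hb (hfinv_mem _ (hf_mem a ha))
      · intro h
        exfalso
        have := (hAdjChar _ ha b).mp h
        rcases this with rfl | rfl
        · exact hb (hf_mem a ha)
        · exact hb (hfinv_mem a ha)
    · rw [List.formPerm_apply_of_notMem ha]
      constructor
      · intro h
        exfalso
        have := (hAdjChar _ (hf_mem b hb) a).mp h.symm
        rcases this with rfl | rfl
        · exact ha (hf_mem _ (hf_mem b hb))
        · exact ha (hfinv_mem _ (hf_mem b hb))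
      · intro h
        exfalso
        have := (hAdjChar _ hb a).mp h.symm
        rcases this with rfl | rfl
        · exact ha (hf_mem b hb)
        · exact ha (hfinv_mem b hb)
    · rw [List.formPerm_apply_of_notMem ha, List.formPerm_apply_of_notMem hb]
  refine ⟨⟨s.formPerm, fun {a b} => hmapiff a b⟩, s.head hsne, ?_⟩
  exact hfix _ (List.head_mem hsne)

end twoRegular

-- matrix tables and decide lemmas
def dcountX {b r : ℕ} (adjT : (Fin b → Bool) → Fin r → Fin r → Bool) (f : Fin b → Bool)
    (i : Fin r) : ℕ :=
  (Finset.univ.filter (fun j => adjT f i j = true)).card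

def adj4 (f : Fin 6 → Bool) : Fin 4 → Fin 4 → Bool :=
  ![![false, f 0, f 1, f 2],
    ![f 0, false, f 3, f 4],
    ![f 1, f 3, false, f 5],
    ![f 2, f 4, f 5, false]]

def adj3 (f : Fin 3 → Bool) : Fin 3 → Fin 3 → Bool :=
  ![![false, f 0, f 1],
    ![f 0, false, f 2],
    ![f 1, f 2, false]]

def adj2 (f : Fin 1 → Bool) : Fin 2 → Fin 2 → Bool :=
  ![![false, f 0],
    ![f 0, false]]

def adj1 (_f : Fin 0 → Bool) : Fin 1 → Fin 1 → Bool := fun _ _ => false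

def adj0 (_f : Fin 0 → Bool) : Fin 0 → Fin 0 → Bool := fun i _ => i.elim0

def canon4 : Fin 7 → Fin 6 → Bool :=
  ![![false,false,false,false,false,false],
    ![true ,false,false,false,false,false],
    ![true ,false,false,true ,false,false],
    ![true ,false,false,false,false,true ],
    ![true ,true ,false,true ,false,false],
    ![true ,false,false,true ,false,true ],
    ![true ,false,true ,true ,false,true ]]

def canon3 : Fin 4 → Fin 3 → Bool :=
  ![![false,false,false],
    ![true ,false,false],
    ![true ,true ,false],
    ![true ,true ,true ]]

def canon2 : Fin 2 → Fin 1 → Bool := ![![false], ![true]]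

def canon1 : Fin 1 → Fin 0 → Bool := ![![]]

def canon0 : Fin 1 → Fin 0 → Bool := ![![]]

def perm4 : Fin 24 → Fin 4 → Fin 4 :=
  ![![0,1,2,3],![0,1,3,2],![0,2,1,3],![0,2,3,1],![0,3,1,2],![0,3,2,1],
    ![1,0,2,3],![1,0,3,2],![1,2,0,3],![1,2,3,0],![1,3,0,2],![1,3,2,0],
    ![2,0,1,3],![2,0,3,1],![2,1,0,3],![2,1,3,0],![2,3,0,1],![2,3,1,0],
    ![3,0,1,2],![3,0,2,1],![3,1,0,2],![3,1,2,0],![3,2,0,1],![3,2,1,0]]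

def perm3 : Fin 6 → Fin 3 → Fin 3 :=
  ![![0,1,2],![0,2,1],![1,0,2],![1,2,0],![2,0,1],![2,1,0]]

def perm2 : Fin 2 → Fin 2 → Fin 2 := ![![0,1],![1,0]]

def perm1 : Fin 1 → Fin 1 → Fin 1 := ![![0]]

def perm0 : Fin 1 → Fin 0 → Fin 0 := ![![]]

lemma hperm4 : ∀ p, Function.Bijective (perm4 p) := by decide
lemma hperm3 : ∀ p, Function.Bijective (perm3 p) := by decide
lemma hperm2 : ∀ p, Function.Bijective (perm2 p) := by decide
lemma hperm1 : ∀ p, Function.Bijective (perm1 p) := by decide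
lemma hperm0 : ∀ p, Function.Bijective (perm0 p) := by decide

set_option maxHeartbeats 16000000 in
lemma hmatch4 : ∀ f, (∀ i, dcountX adj4 f i ≤ 2) →
    ∃ (k : Fin 7) (p : Fin 24),
      ∀ i j, adj4 f i j = adj4 (canon4 k) (perm4 p i) (perm4 p j) := by
  decide

lemma hmatch3 : ∀ f, (∀ i, dcountX adj3 f i ≤ 2) →
    ∃ (k : Fin 4) (p : Fin 6),
      ∀ i j, adj3 f i j = adj3 (canon3 k) (perm3 p i) (perm3 p j) := by
  decide

lemma hmatch2 : ∀ f, (∀ i, dcountX adj2 f i ≤ 2) →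
    ∃ (k : Fin 2) (p : Fin 2),
      ∀ i j, adj2 f i j = adj2 (canon2 k) (perm2 p i) (perm2 p j) := by
  decide

lemma hmatch1 : ∀ f, (∀ i, dcountX adj1 f i ≤ 2) →
    ∃ (k : Fin 1) (p : Fin 1),
      ∀ i j, adj1 f i j = adj1 (canon1 k) (perm1 p i) (perm1 p j) := by
  decide

lemma hmatch0 : ∀ f, (∀ i, dcountX adj0 f i ≤ 2) →
    ∃ (k : Fin 1) (p : Fin 1),
      ∀ i j, adj0 f i j = adj0 (canon0 k) (perm0 p i) (perm0 p j) := by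
  decide

lemma hrep4 : ∀ A : Fin 4 → Fin 4 → Bool, (∀ i j, A i j = A j i) → (∀ i, A i i = false) →
    ∃ f, ∀ i j, adj4 f i j = A i j := by
  intro A hs hi
  refine ⟨![A 0 1, A 0 2, A 0 3, A 1 2, A 1 3, A 2 3], ?_⟩
  intro i j
  fin_cases i <;> fin_cases j <;>
    simp [adj4] <;> first | exact hi _ | exact (hi _).symm | exact hs _ _ | rfl

lemma hrep3 : ∀ A : Fin 3 → Fin 3 → Bool, (∀ i j, A i j = A j i) → (∀ i, A i i = false) →
    ∃ f, ∀ i j, adj3 f i j = A i j := by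
  intro A hs hi
  refine ⟨![A 0 1, A 0 2, A 1 2], ?_⟩
  intro i j
  fin_cases i <;> fin_cases j <;>
    simp [adj3] <;> first | exact hi _ | exact (hi _).symm | exact hs _ _ | rfl

lemma hrep2 : ∀ A : Fin 2 → Fin 2 → Bool, (∀ i j, A i j = A j i) → (∀ i, A i i = false) →
    ∃ f, ∀ i j, adj2 f i j = A i j := by
  intro A hs hi
  refine ⟨![A 0 1], ?_⟩
  intro i j
  fin_cases i <;> fin_cases j <;>
    simp [adj2] <;> first | exact hi _ | exact (hi _).symm | exact hs _ _ | rfl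

lemma hrep1 : ∀ A : Fin 1 → Fin 1 → Bool, (∀ i j, A i j = A j i) → (∀ i, A i i = false) →
    ∃ f, ∀ i j, adj1 f i j = A i j := by
  intro A hs hi
  refine ⟨![], ?_⟩
  intro i j
  fin_cases i <;> fin_cases j <;> first | exact hi _ | exact (hi _).symm

lemma hrep0 : ∀ A : Fin 0 → Fin 0 → Bool, (∀ i j, A i j = A j i) → (∀ i, A i i = false) →
    ∃ f, ∀ i j, adj0 f i j = A i j := by
  intro A _ _
  exact ⟨![], fun i => i.elim0⟩

lemma machinery {V : Type*} [Fintype V] [DecidableEq V] (G : SimpleGraph V)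
    [DecidableRel G.Adj] {r b N : ℕ}
    (adjT : (Fin b → Bool) → Fin r → Fin r → Bool)
    (canon : Fin N → (Fin b → Bool))
    (hrep : ∀ A : Fin r → Fin r → Bool, (∀ i j, A i j = A j i) → (∀ i, A i i = false) →
      ∃ f, ∀ i j, adjT f i j = A i j)
    (hmatch : ∀ f, (∀ i, dcountX adjT f i ≤ 2) →
      ∃ (k : Fin N) (σ : Fin r → Fin r), Function.Bijective σ ∧
        ∀ i j, adjT f i j = adjT (canon k) (σ i) (σ j))
    (hreg : G.IsRegularOfDegree r) (hLI : G.LinkIrregular)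
    (hcodeg : ∀ u x, G.Adj u x → (G.neighborFinset u ∩ G.neighborFinset x).card ≤ 2)
    (hN : N < Fintype.card V) : False := by
  have key : ∀ u : V, ∃ (k : Fin N) (e : Fin r ≃ (G.neighborSet u)) (σ : Fin r → Fin r),
      Function.Bijective σ ∧
      ∀ i j, decide (G.Adj ↑(e i) ↑(e j)) = adjT (canon k) (σ i) (σ j) := by
    intro u
    have hc : Fintype.card (G.neighborSet u) = r := by
      rw [G.card_neighborSet_eq_degree]; exact hreg u
    have e : Fin r ≃ (G.neighborSet u) := (Fintype.equivFinOfCardEq hc).symm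
    obtain ⟨f, hf⟩ := hrep (fun i j => decide (G.Adj ↑(e i) ↑(e j)))
      (fun i j => by simp only [decide_eq_decide]; exact G.adj_comm _ _)
      (fun i => by simp)
    -- dcountX bound
    have hdc : ∀ i, dcountX adjT f i ≤ 2 := by
      intro i
      have hx : G.Adj u ↑(e i) := (e i).2
      have hcard : dcountX adjT f i
          = ((G.neighborFinset u).filter (fun y => G.Adj ↑(e i) y)).card := by
        unfold dcountX
        apply Finset.card_bij (fun j _ => ((e j : G.neighborSet u) : V))
        · intro j hj
          rw [Finset.mem_filter] at hj ⊢
          refine ⟨by rw [SimpleGraph.mem_neighborFinset]; exact (e j).2, ?_⟩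
          exact of_decide_eq_true ((hf i j).symm.trans hj.2)
        · intro a ha b hb hab
          have : e a = e b := Subtype.ext hab
          exact e.injective this
        · intro y hy
          rw [Finset.mem_filter, SimpleGraph.mem_neighborFinset] at hy
          refine ⟨e.symm ⟨y, hy.1⟩, ?_, by simp⟩
          rw [Finset.mem_filter]
          refine ⟨Finset.mem_univ _, ?_⟩
          have hd : decide (G.Adj ↑(e i) ↑(e (e.symm ⟨y, hy.1⟩))) = true :=
            decide_eq_true (by simpa using hy.2)
          exact (hf i _).trans hd
      rw [hcard]
      have hsub : (G.neighborFinset u).filter (fun y => G.Adj ↑(e i) y)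
          ⊆ G.neighborFinset u ∩ G.neighborFinset ↑(e i) := by
        intro z hz
        rw [Finset.mem_filter] at hz
        rw [Finset.mem_inter]
        exact ⟨hz.1, by rw [SimpleGraph.mem_neighborFinset]; exact hz.2⟩
      calc ((G.neighborFinset u).filter (fun y => G.Adj ↑(e i) y)).card
          ≤ (G.neighborFinset u ∩ G.neighborFinset ↑(e i)).card := Finset.card_le_card hsub
        _ ≤ 2 := hcodeg u _ hx
    obtain ⟨k, σ, hbij, hiso⟩ := hmatch f hdc
    exact ⟨k, e, σ, hbij, fun i j => (hf i j).symm.trans (hiso i j)⟩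
  choose K E Sg hbij hrel using key
  obtain ⟨u, v, huv, hKuv⟩ := Fintype.exists_ne_map_eq_of_card_lt K (by simpa using hN)
  -- build iso between link u and link v
  set su := Equiv.ofBijective _ (hbij u) with hsu
  set sv := Equiv.ofBijective _ (hbij v) with hsv
  have hadj : ∀ i j : Fin r,
      G.Adj ↑(E u i) ↑(E u j) ↔ G.Adj ↑(E v (sv.symm (su i))) ↑(E v (sv.symm (su j))) := by
    intro i j
    have h1 := hrel u i j
    have h2 := hrel v (sv.symm (su i)) (sv.symm (su j))
    have hs : ∀ i : Fin r, Sg v (sv.symm (su i)) = Sg u i := by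
      intro i
      exact sv.apply_symm_apply (su i)
    rw [hs i, hs j, ← hKuv] at h2
    have := h1.trans h2.symm
    rw [decide_eq_decide] at this
    exact this
  have hiso : Nonempty (G.link u ≃g G.link v) := by
    refine ⟨{ toEquiv := ((E u).symm.trans ((su.trans sv.symm).trans (E v))),
              map_rel_iff' := ?_ }⟩
    intro a b
    rw [link_adj, link_adj]
    simp only [Equiv.trans_apply]
    have ha := (hadj ((E u).symm a) ((E u).symm b)).symm
    simpa using ha
  exact hLI u v huv hiso

section smallcodeg
variable {V : Type*} [Fintype V] [DecidableEq V]

lemma hcodeg_small (G : SimpleGraph V) [DecidableRel G.Adj] {r : ℕ}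
    (hreg : G.IsRegularOfDegree r) (hr : r ≤ 3) :
    ∀ u x, G.Adj u x → (G.neighborFinset u ∩ G.neighborFinset x).card ≤ 2 := by
  intro u x hux
  have hsub : G.neighborFinset u ∩ G.neighborFinset x ⊆ (G.neighborFinset u).erase x := by
    intro z hz
    rw [Finset.mem_inter] at hz
    rw [Finset.mem_erase]
    exact ⟨((SimpleGraph.mem_neighborFinset _ _ _).mp hz.2).ne', hz.1⟩
  calc (G.neighborFinset u ∩ G.neighborFinset x).card
      ≤ ((G.neighborFinset u).erase x).card := Finset.card_le_card hsub
    _ = r - 1 := by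
        have hdeg : #(G.neighborFinset u) = r := hreg u
        rw [Finset.card_erase_of_mem (by rwa [SimpleGraph.mem_neighborFinset]), hdeg]
    _ ≤ 2 := by omega

lemma hcodeg4 (G : SimpleGraph V) [DecidableRel G.Adj]
    (hreg : G.IsRegularOfDegree 4) (hLI : G.LinkIrregular) :
    ∀ u x, G.Adj u x → (G.neighborFinset u ∩ G.neighborFinset x).card ≤ 2 := by
  intro u x hux
  by_contra hgt
  push_neg at hgt
  set t := G.neighborFinset u ∩ G.neighborFinset x with ht
  have hsub : t ⊆ (G.neighborFinset u).erase x := by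
    intro z hz
    rw [ht, Finset.mem_inter] at hz
    rw [Finset.mem_erase]
    exact ⟨((SimpleGraph.mem_neighborFinset _ _ _).mp hz.2).ne', hz.1⟩
  have h3 : t.card = 3 := by
    have hle := Finset.card_le_card hsub
    have hdeg : #(G.neighborFinset u) = 4 := hreg u
    rw [Finset.card_erase_of_mem (by rwa [SimpleGraph.mem_neighborFinset]), hdeg] at hle
    omega
  have hu_notmem : u ∉ t := by
    intro h
    rw [ht, Finset.mem_inter, SimpleGraph.mem_neighborFinset] at h
    exact G.irrefl h.1
  have hx_notmem : x ∉ t := by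
    intro h
    rw [ht, Finset.mem_inter, SimpleGraph.mem_neighborFinset,
      SimpleGraph.mem_neighborFinset] at h
    exact G.irrefl h.2
  have hNx : G.neighborFinset x = insert u t := by
    refine (Finset.eq_of_subset_of_card_le ?_ ?_).symm
    · intro z hz
      rcases Finset.mem_insert.mp hz with rfl | hzt
      · rw [SimpleGraph.mem_neighborFinset]; exact hux.symm
      · exact (Finset.inter_subset_right) hzt
    · have hdeg : #(G.neighborFinset x) = 4 := hreg x
      rw [hdeg, Finset.card_insert_of_notMem hu_notmem, h3]
  have hNu : G.neighborFinset u = insert x t := by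
    refine (Finset.eq_of_subset_of_card_le ?_ ?_).symm
    · intro z hz
      rcases Finset.mem_insert.mp hz with rfl | hzt
      · rw [SimpleGraph.mem_neighborFinset]; exact hux
      · exact (Finset.inter_subset_left) hzt
    · have hdeg : #(G.neighborFinset u) = 4 := hreg u
      rw [hdeg, Finset.card_insert_of_notMem hx_notmem, h3]
  refine hLI u x hux.ne (twin_link_iso G u x hux.ne ?_)
  intro z hzu hzx
  rw [← SimpleGraph.mem_neighborFinset, ← SimpleGraph.mem_neighborFinset, hNu, hNx,
    Finset.mem_insert, Finset.mem_insert]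
  constructor
  · rintro (rfl | h)
    · exact absurd rfl hzx
    · exact Or.inr h
  · rintro (rfl | h)
    · exact absurd rfl hzu
    · exact Or.inr h

end smallcodeg

section autsmall
variable {V : Type*} [Fintype V] [DecidableEq V]

lemma exists_aut_deg0 (H : SimpleGraph V) [DecidableRel H.Adj]
    (h0 : H.IsRegularOfDegree 0) (hcard : 2 ≤ Fintype.card V) :
    ∃ (σ : H ≃g H) (x : V), σ x ≠ x := by
  obtain ⟨x, y, hxy⟩ := Fintype.exists_pair_of_one_lt_card (α := V) (by omega)
  have hno : ∀ a b : V, ¬H.Adj a b := by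
    intro a b hab
    have h := h0 a
    rw [SimpleGraph.degree, Finset.card_eq_zero] at h
    have : b ∈ H.neighborFinset a := by rwa [SimpleGraph.mem_neighborFinset]
    rw [h] at this
    exact absurd this (Finset.notMem_empty b)
  refine ⟨⟨Equiv.swap x y, ?_⟩, x, ?_⟩
  · intro a b
    exact iff_of_false (hno _ _) (hno _ _)
  · show Equiv.swap x y x ≠ x
    rw [Equiv.swap_apply_left]
    exact hxy.symm

lemma exists_aut_deg1 (H : SimpleGraph V) [DecidableRel H.Adj]
    (h1 : H.IsRegularOfDegree 1) (hcard : 2 ≤ Fintype.card V) :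
    ∃ (σ : H ≃g H) (x : V), σ x ≠ x := by
  have hnV : Nonempty V := Fintype.card_pos_iff.mp (by omega)
  obtain ⟨x0⟩ := hnV
  have : (H.neighborFinset x0).Nonempty := by
    rw [← Finset.card_pos, ← SimpleGraph.degree, h1 x0]; norm_num
  obtain ⟨y0, hy0⟩ := this
  rw [SimpleGraph.mem_neighborFinset] at hy0
  have huniq : ∀ a b c : V, H.Adj a b → H.Adj a c → b = c := by
    intro a b c hb hc
    have h := h1 a
    rw [SimpleGraph.degree] at h
    exact Finset.card_le_one.mp (le_of_eq h)
      b (by rwa [SimpleGraph.mem_neighborFinset])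
      c (by rwa [SimpleGraph.mem_neighborFinset])
  have dir : ∀ a b : V, H.Adj a b → H.Adj (Equiv.swap x0 y0 a) (Equiv.swap x0 y0 b) := by
    intro a b h
    by_cases hax : a = x0
    · subst hax
      have hb : b = y0 := huniq a b y0 h hy0
      subst hb
      rw [Equiv.swap_apply_left, Equiv.swap_apply_right]
      exact h.symm
    by_cases hay : a = y0
    · subst hay
      have hb : b = x0 := huniq a b x0 h hy0.symm
      subst hb
      rw [Equiv.swap_apply_right, Equiv.swap_apply_left]
      exact h.symm
    · have hbx : b ≠ x0 := by
        rintro rfl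
        exact hay (huniq b a y0 h.symm hy0)
      have hby : b ≠ y0 := by
        rintro rfl
        exact hax (huniq b a x0 h.symm hy0.symm)
      rw [Equiv.swap_apply_of_ne_of_ne hax hay, Equiv.swap_apply_of_ne_of_ne hbx hby]
      exact h
  refine ⟨⟨Equiv.swap x0 y0, ?_⟩, x0, ?_⟩
  · intro a b
    constructor
    · intro h
      have := dir _ _ h
      rwa [Equiv.swap_apply_self, Equiv.swap_apply_self] at this
    · exact dir a b
  · show Equiv.swap x0 y0 x0 ≠ x0
    rw [Equiv.swap_apply_left]
    exact hy0.ne'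

end autsmall


set_option maxHeartbeats 2000000 in
/-- There is no regular link-irregular graph on `n ≤ 9` vertices. -/
theorem no_small_regular_linkIrregular {V : Type*} [Fintype V]
    (G : SimpleGraph V) [DecidableRel G.Adj] (hn : 2 ≤ Fintype.card V)
    (hn9 : Fintype.card V ≤ 9) (r : ℕ) (hreg : G.IsRegularOfDegree r) :
    ¬ G.LinkIrregular := by
  classical
  intro hLI
  have hnV : Nonempty V := Fintype.card_pos_iff.mp (by omega)
  have hrn : r < Fintype.card V := by
    obtain ⟨v0⟩ := hnV
    rw [← hreg v0]
    exact G.degree_lt_card_verts v0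
  by_cases hd : Fintype.card V ≤ r + 3
  · have hcompl : Gᶜ.IsRegularOfDegree (Fintype.card V - 1 - r) := hreg.compl
    have hobt : ∃ (σ : Gᶜ ≃g Gᶜ) (x : V), σ x ≠ x := by
      obtain h0 | h1 | h2 : Fintype.card V - 1 - r = 0 ∨ Fintype.card V - 1 - r = 1 ∨
          Fintype.card V - 1 - r = 2 := by omega
      · rw [h0] at hcompl
        exact exists_aut_deg0 Gᶜ hcompl hn
      · rw [h1] at hcompl
        exact exists_aut_deg1 Gᶜ hcompl hn
      · rw [h2] at hcompl
        exact exists_aut_of_two_regular Gᶜ hcompl hnV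
    obtain ⟨σ, x, hx⟩ := hobt
    have hiso := aut_link_iso G (autOfComplAut G σ) x
    exact hLI x ((autOfComplAut G σ) x) (fun h => hx h.symm) hiso
  · push_neg at hd
    rcases Nat.lt_or_ge r 5 with h5 | h5
    · interval_cases r
      · exact machinery G adj0 canon0 hrep0
          (fun f hf => by obtain ⟨k, p, h⟩ := hmatch0 f hf; exact ⟨k, perm0 p, hperm0 p, h⟩)
          hreg hLI (hcodeg_small G hreg (by norm_num)) (by omega)
      · exact machinery G adj1 canon1 hrep1
          (fun f hf => by obtain ⟨k, p, h⟩ := hmatch1 f hf; exact ⟨k, perm1 p, hperm1 p, h⟩)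
          hreg hLI (hcodeg_small G hreg (by norm_num)) (by omega)
      · exact machinery G adj2 canon2 hrep2
          (fun f hf => by obtain ⟨k, p, h⟩ := hmatch2 f hf; exact ⟨k, perm2 p, hperm2 p, h⟩)
          hreg hLI (hcodeg_small G hreg (by norm_num)) (by omega)
      · exact machinery G adj3 canon3 hrep3
          (fun f hf => by obtain ⟨k, p, h⟩ := hmatch3 f hf; exact ⟨k, perm3 p, hperm3 p, h⟩)
          hreg hLI (hcodeg_small G hreg (by norm_num)) (by omega)
      · exact machinery G adj4 canon4 hrep4
          (fun f hf => by obtain ⟨k, p, h⟩ := hmatch4 f hf; exact ⟨k, perm4 p, hperm4 p, h⟩)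
          hreg hLI (hcodeg4 G hreg hLI) (by omega)
    · have hr5 : r = 5 := by omega
      have hc9 : Fintype.card V = 9 := by omega
      have hsum := G.sum_degrees_eq_twice_card_edges
      have hsum2 : ∑ v : V, G.degree v = Fintype.card V * r := by
        rw [Finset.sum_congr rfl fun v _ => hreg v, Finset.sum_const, Finset.card_univ,
          smul_eq_mul]
      rw [hsum2, hc9, hr5] at hsum
      omega
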